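/- Let q be a prime power and let T = L_1 L_2 ⋯ L_d be a product of polynomials of total degree at most 1 in F_q[x_1,…,x_N]. Let r be the dimension of the F_q-linear span of {L_1, …, L_d} inside the space of polynomials of total degree at most 1 (equivalently, viewing each L_i as a vector in F_q^{N+1}). Then the F_q-linear span, inside the space of all functions F_q^N → F_q, of the evaluation functions a ↦ (∂^α T)(a) taken over all partial-derivative multi-indices α (including α = 0), has dimension at most q^r. -/

import Mathlib

open MvPolynomial

noncomputable section

/-- Iterated partial derivative with respect to a list of variables (arbitrary
partial-derivative multi-indices `α`, including `α = 0`, correspond to such lists). -/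
def pderivList {σ : Type*} {K : Type*} [CommSemiring K] (l : List σ)
    (f : MvPolynomial σ K) : MvPolynomial σ K :=
  l.foldr (fun v g => pderiv v g) f

/-- A partial derivative of a polynomial of total degree at most 1 is a constant. -/
lemma pderiv_constant_of_totalDegree_le_one {N : ℕ} {Fq : Type*} [Field Fq]
    (v : Fin N) (p : MvPolynomial (Fin N) Fq) (hp : p.totalDegree ≤ 1) :
    ∃ c : Fq, pderiv v p = C c := by
  classical
  suffices h : pderiv v p ∈ (⊥ : Subalgebra Fq (MvPolynomial (Fin N) Fq)) by
    rcases Algebra.mem_bot.mp h with ⟨c, hc⟩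
    exact ⟨c, by rw [← hc, ← algebraMap_eq]⟩
  rw [p.as_sum, map_sum]
  apply sum_mem
  intro s hs
  rw [pderiv_monomial]
  by_cases h0 : s v = 0
  · simp only [h0, Nat.cast_zero, mul_zero, map_zero]
    exact zero_mem _
  · have hsum : (s.sum fun _ e => e) ≤ 1 := le_trans (le_totalDegree hs) hp
    have hsv : s - Finsupp.single v 1 = 0 := by
      ext j
      rw [Finsupp.tsub_apply]
      by_cases hj : j = v
      · subst hj
        have h1 : s j ≤ 1 := le_trans (Finsupp.le_degree j s) hsum
        simp only [Finsupp.single_eq_same, Finsupp.coe_zero, Pi.zero_apply]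
        omega
      · have hzero : s j = 0 := by
          by_contra hne
          have hsub : ({j, v} : Finset (Fin N)) ⊆ s.support := by
            intro x hx
            simp only [Finset.mem_insert, Finset.mem_singleton] at hx
            rcases hx with rfl | rfl <;> simp [Finsupp.mem_support_iff, hne, h0]
          have := Finset.sum_le_sum_of_subset hsub (f := fun i => s i)
          rw [Finset.sum_pair hj] at this
          have : s j + s v ≤ 1 := le_trans this hsum
          omega
        simp [hzero]
    rw [hsv]
    rw [monomial_zero', ← algebraMap_eq]
    exact Subalgebra.algebraMap_mem _ _

/-- Let `T = L_1 ⋯ L_d` be a product of affine linear forms in `F_q[x_1,…,x_N]` and let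
`r` be the dimension of the `F_q`-span of `{L_1, …, L_d}` (inside the polynomial ring,
equivalently viewing each `L_i` as a vector in `F_q^(N+1)`). Then the `F_q`-span of the
evaluation functions `a ↦ (∂^α T)(a)` over all partial-derivative multi-indices `α`
(including `α = 0`) has dimension at most `q^r`. -/
theorem derivative_space_of_product_of_linear_forms
    (Fq : Type*) [Field Fq] [Fintype Fq] (N d : ℕ)
    (L : Fin d → MvPolynomial (Fin N) Fq)
    (hdeg : ∀ j, (L j).totalDegree ≤ 1) :
    Module.finrank Fq ↥(Submodule.span Fq
      {g : (Fin N → Fq) → Fq | ∃ l : List (Fin N),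
        g = fun a => MvPolynomial.eval a (pderivList l (∏ j : Fin d, L j))})
      ≤ Fintype.card Fq ^
          (Module.finrank Fq ↥(Submodule.span Fq (Set.range L))) := by
  classical
  set W := Submodule.span Fq (Set.range L) with hWdef
  have hWfin : FiniteDimensional Fq W :=
    FiniteDimensional.span_of_finite Fq (Set.finite_range L)
  set r := Module.finrank Fq W with hr
  let b : Module.Basis (Fin r) Fq W := Module.finBasis Fq W
  let φ : (Fin N → Fq) → (Fin r → Fq) := fun a i => eval a ((b i : W) : MvPolynomial (Fin N) Fq)
  let Φ : ((Fin r → Fq) → Fq) →ₗ[Fq] ((Fin N → Fq) → Fq) :=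
    { toFun := fun f => f ∘ φ
      map_add' := fun f g => rfl
      map_smul' := fun c f => rfl }
  -- every element of W factors through φ
  have hW : ∀ p ∈ W, ∃ f : (Fin r → Fq) → Fq, (fun a => eval a p) = f ∘ φ := by
    intro p hp
    refine ⟨fun v => ∑ i, (b.repr ⟨p, hp⟩) i * v i, ?_⟩
    have hrepr : (⟨p, hp⟩ : W) = ∑ i, (b.repr ⟨p, hp⟩) i • b i := (b.sum_repr ⟨p, hp⟩).symm
    have hco : p = ∑ i, (b.repr ⟨p, hp⟩) i • ((b i : W) : MvPolynomial (Fin N) Fq) := by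
      have := congrArg (Subtype.val) hrepr
      simpa only [Submodule.coe_sum, Submodule.coe_smul] using this
    funext a
    have h2 := congrArg (eval a) hco
    simp only [map_sum, smul_eq_C_mul, map_mul, eval_C] at h2
    simpa [φ] using h2
  -- the subalgebra generated by the linear forms
  set A := Algebra.adjoin Fq (Set.range L) with hA
  -- derivatives preserve A
  have hderiv : ∀ (v : Fin N), ∀ p ∈ A, pderiv v p ∈ A := by
    intro v p hp
    induction hp using Algebra.adjoin_induction with
    | mem x hx =>
      obtain ⟨j, rfl⟩ := hx
      obtain ⟨c, hc⟩ := pderiv_constant_of_totalDegree_le_one v (L j) (hdeg j)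
      rw [hc, ← algebraMap_eq]
      exact Subalgebra.algebraMap_mem A c
    | algebraMap c =>
      rw [algebraMap_eq, pderiv_C]
      exact Subalgebra.zero_mem A
    | add x y hx hy ihx ihy =>
      rw [map_add]; exact add_mem ihx ihy
    | mul x y hx hy ihx ihy =>
      rw [pderiv_mul]
      exact add_mem (mul_mem ihx hy) (mul_mem hx ihy)
  -- all iterated derivatives of the product lie in A
  have hT : ∀ l : List (Fin N), pderivList l (∏ j : Fin d, L j) ∈ A := by
    intro l
    induction l with
    | nil =>
      show (∏ j : Fin d, L j) ∈ A
      exact Subalgebra.prod_mem A fun j _ => Algebra.subset_adjoin ⟨j, rfl⟩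
    | cons v t ih =>
      exact hderiv v _ ih
  -- evaluation of elements of A factors through φ
  have hAf : ∀ p ∈ A, ∃ f : (Fin r → Fq) → Fq, (fun a => eval a p) = f ∘ φ := by
    intro p hp
    induction hp using Algebra.adjoin_induction with
    | mem x hx => exact hW x (Submodule.subset_span hx)
    | algebraMap c =>
      exact ⟨fun _ => c, by funext a; simp [algebraMap_eq]⟩
    | add x y hx hy ihx ihy =>
      obtain ⟨f, hf⟩ := ihx
      obtain ⟨g, hg⟩ := ihy
      refine ⟨f + g, funext fun a => ?_⟩
      have := congrFun hf a
      have := congrFun hg a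
      simp_all
    | mul x y hx hy ihx ihy =>
      obtain ⟨f, hf⟩ := ihx
      obtain ⟨g, hg⟩ := ihy
      refine ⟨f * g, funext fun a => ?_⟩
      have := congrFun hf a
      have := congrFun hg a
      simp_all
  -- conclude
  have hsub : {g : (Fin N → Fq) → Fq | ∃ l : List (Fin N),
      g = fun a => MvPolynomial.eval a (pderivList l (∏ j : Fin d, L j))} ⊆
      ↑(LinearMap.range Φ) := by
    rintro g ⟨l, rfl⟩
    obtain ⟨f, hf⟩ := hAf _ (hT l)
    exact ⟨f, hf.symm⟩
  have hle : Submodule.span Fq {g : (Fin N → Fq) → Fq | ∃ l : List (Fin N),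
      g = fun a => MvPolynomial.eval a (pderivList l (∏ j : Fin d, L j))} ≤
      LinearMap.range Φ := Submodule.span_le.mpr hsub
  have hfin : FiniteDimensional Fq ((Fin r → Fq) → Fq) := inferInstance
  calc Module.finrank Fq ↥(Submodule.span Fq _)
      ≤ Module.finrank Fq ↥(LinearMap.range Φ) := Submodule.finrank_mono hle
    _ ≤ Module.finrank Fq ((Fin r → Fq) → Fq) := LinearMap.finrank_range_le Φ
    _ = Fintype.card (Fin r → Fq) := Module.finrank_pi Fq
    _ = Fintype.card Fq ^ r := by simp [Fintype.card_fun]
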